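/- For all real x, the difference of derivatives |PTSoftplus'(x) − Softplus'(x)| ≤ 1/(1 + e^{x_c}) ≤ 0.371, where Softplus'(x) = e^x/(1+e^x) is the sigmoid and PTSoftplus'(x) = (ln 2)·2^x for x < x_c and 1 for x ≥ x_c. -/

import Mathlib

noncomputable section
open Real

def xc : ℝ := Real.logb 2 (1 / Real.log 2)
def PTSoftplus' (x : ℝ) : ℝ := if x < xc then Real.log 2 * (2:ℝ) ^ x else 1
def sigmoid (x : ℝ) : ℝ := Real.exp x / (1 + Real.exp x)

lemma log2_pos : (0:ℝ) < Real.log 2 := Real.log_pos one_lt_two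

lemma log2_lt_one : Real.log 2 < 1 :=
  lt_trans Real.log_two_lt_d9 (by norm_num)

lemma two_rpow_xc : (2:ℝ) ^ xc = 1 / Real.log 2 :=
  Real.rpow_logb (by norm_num) (by norm_num) (by positivity)

lemma log2_mul_two_rpow_xc : Real.log 2 * (2:ℝ) ^ xc = 1 := by
  rw [two_rpow_xc]
  field_simp

lemma xc_ge : (541:ℝ)/1024 ≤ xc := by
  rw [← Real.rpow_le_rpow_left_iff (x := (2:ℝ)) one_lt_two, two_rpow_xc]
  have h2 : ((2:ℝ) ^ ((541:ℝ)/1024)) ^ (1024:ℕ) = 2 ^ (541:ℕ) := by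
    rw [← Real.rpow_natCast ((2:ℝ) ^ ((541:ℝ)/1024)) 1024, ← Real.rpow_mul (by norm_num)]
    norm_num
  apply le_of_pow_le_pow_left₀ (n := 1024) (by norm_num) (by positivity)
  rw [h2]
  have hub : Real.log 2 < 0.6931471808 := Real.log_two_lt_d9
  have h3 : (1 / (0.6931471808:ℝ)) ^ (1024:ℕ) ≤ (1 / Real.log 2) ^ (1024:ℕ) := by
    apply pow_le_pow_left₀ (by norm_num)
    apply one_div_le_one_div_of_le log2_pos hub.le
  refine le_trans ?_ h3
  rw [div_pow, one_pow, le_div_iff₀ (by positivity)]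
  norm_num
  rw [div_pow, mul_div_assoc', div_le_one (by positivity)]
  exact_mod_cast (by decide +kernel : (2:ℕ) ^ 541 * 108304247 ^ 1024 ≤ 156250000 ^ 1024)

lemma exp_xc_ge : (629:ℝ)/371 ≤ Real.exp xc := by
  have h1 : Real.exp ((541:ℝ)/1024) ≤ Real.exp xc := Real.exp_le_exp.2 xc_ge
  refine le_trans ?_ h1
  apply le_of_pow_le_pow_left₀ (n := 1024) (by norm_num) (Real.exp_pos _).le
  have h2 : (Real.exp ((541:ℝ)/1024)) ^ (1024:ℕ) = Real.exp 541 := by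
    rw [← Real.exp_nat_mul]
    norm_num
  rw [h2]
  have h3 : Real.exp 541 = (Real.exp 1) ^ (541:ℕ) := by
    rw [← Real.exp_nat_mul]; norm_num
  rw [h3]
  have he : (2.7182818283:ℝ) ^ (541:ℕ) ≤ (Real.exp 1) ^ (541:ℕ) :=
    pow_le_pow_left₀ (by norm_num) Real.exp_one_gt_d9.le _
  refine le_trans ?_ he
  norm_num
  rw [div_pow, div_pow, div_le_div_iff₀ (by positivity) (by positivity)]
  exact_mod_cast (by decide +kernel : (629:ℕ) ^ 1024 * 10000000000 ^ 541 ≤ 27182818283 ^ 541 * 371 ^ 1024)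

lemma xc_le : xc ≤ 7/10 := by
  rw [← Real.rpow_le_rpow_left_iff (x := (2:ℝ)) one_lt_two, two_rpow_xc]
  have h2 : ((2:ℝ) ^ ((7:ℝ)/10)) ^ (10:ℕ) = 2 ^ (7:ℕ) := by
    rw [← Real.rpow_natCast ((2:ℝ) ^ ((7:ℝ)/10)) 10, ← Real.rpow_mul (by norm_num)]
    norm_num
  apply le_of_pow_le_pow_left₀ (n := 10) (by norm_num) (by positivity)
  rw [h2]
  have hlb : (0.6931471803:ℝ) < Real.log 2 := Real.log_two_gt_d9
  have h3 : (1 / Real.log 2) ^ (10:ℕ) ≤ (1 / (0.6931471803:ℝ)) ^ (10:ℕ) := by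
    apply pow_le_pow_left₀ (by positivity)
    apply one_div_le_one_div_of_le (by norm_num) hlb.le
  refine h3.trans ?_
  rw [div_pow, one_pow, div_le_iff₀ (by positivity)]
  norm_num

lemma exp_xc_le : Real.exp xc ≤ 2.25 := by
  have h1 : Real.exp xc ≤ Real.exp ((7:ℝ)/10) := Real.exp_le_exp.2 xc_le
  refine h1.trans ?_
  apply le_of_pow_le_pow_left₀ (n := 10) (by norm_num) (by norm_num : (0:ℝ) ≤ 2.25)
  have h2 : (Real.exp ((7:ℝ)/10)) ^ (10:ℕ) = Real.exp 7 := by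
    rw [← Real.exp_nat_mul]; norm_num
  rw [h2]
  have h3 : Real.exp 7 = (Real.exp 1) ^ (7:ℕ) := by
    rw [← Real.exp_nat_mul]; norm_num
  rw [h3]
  have he : (Real.exp 1) ^ (7:ℕ) ≤ (2.7182818286:ℝ) ^ (7:ℕ) :=
    pow_le_pow_left₀ (Real.exp_pos _).le Real.exp_one_lt_d9.le _
  refine he.trans ?_
  norm_num

-- e^{xc} (1 - log 2) ≤ log 2
lemma keyN : Real.exp xc * (1 - Real.log 2) ≤ Real.log 2 := by
  have h1 : Real.exp xc * (1 - Real.log 2) ≤ 2.25 * (1 - 0.6931471803) := by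
    apply mul_le_mul exp_xc_le (by linarith [Real.log_two_gt_d9]) (by linarith [log2_lt_one]) (by norm_num)
  refine h1.trans ?_
  have := Real.log_two_gt_d9
  norm_num at this ⊢
  linarith

-- 1 - a ≤ log 2 where a = 1/(1+e^{xc})
lemma one_sub_a_le : 1 - 1 / (1 + Real.exp xc) ≤ Real.log 2 := by
  have hE : (0:ℝ) < 1 + Real.exp xc := by positivity
  have heq : 1 - 1 / (1 + Real.exp xc) = Real.exp xc / (1 + Real.exp xc) := by
    field_simp
    ring
  rw [heq, div_le_iff₀ hE]
  nlinarith [keyN]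

theorem deriv_diff_bound (x : ℝ) :
    |PTSoftplus' x - _root_.sigmoid x| ≤ 1 / (1 + Real.exp xc) ∧
    1 / (1 + Real.exp xc) ≤ 0.371 := by
  have hEc : (0:ℝ) < Real.exp xc := Real.exp_pos _
  have hEc1 : (0:ℝ) < 1 + Real.exp xc := by positivity
  constructor
  · by_cases hx : x < xc
    · -- case x < xc: PTSoftplus' x = log 2 * 2^x
      have hE : (0:ℝ) < Real.exp x := Real.exp_pos _
      have hE1 : (0:ℝ) < 1 + Real.exp x := by positivity
      have hElt : Real.exp x < Real.exp xc := Real.exp_lt_exp.2 hx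
      have h2x : (2:ℝ) ^ x = Real.exp (x * Real.log 2) := by
        rw [Real.rpow_def_of_pos (by norm_num), mul_comm]
      rw [PTSoftplus', if_pos hx]
      set a : ℝ := 1 / (1 + Real.exp xc) with ha
      have ha_pos : 0 < a := by positivity
      have ha1 : a ≤ 1 := by
        rw [ha, div_le_one hEc1]; linarith
      rw [abs_le]
      constructor
      · -- lower bound: log 2 * 2^x ≥ _root_.sigmoid x
        have amgm : (Real.exp x) ^ (1 - Real.log 2) * (1:ℝ) ^ (Real.log 2) ≤
            (1 - Real.log 2) * Real.exp x + Real.log 2 * 1 :=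
          Real.geom_mean_le_arith_mean2_weighted (by linarith [log2_lt_one])
            log2_pos.le hE.le zero_le_one (by ring)
        have hpow : (Real.exp x) ^ (1 - Real.log 2) = Real.exp (x * (1 - Real.log 2)) := by
          rw [Real.exp_mul]
        rw [Real.one_rpow, mul_one, mul_one, hpow] at amgm
        -- so exp(x(1-log2)) ≤ (1-log2) exp x + log 2 ≤ log2 * exp x + log 2
        have h12 : (1:ℝ)/2 < Real.log 2 := by linarith [Real.log_two_gt_d9]
        have amgm2 : Real.exp (x * (1 - Real.log 2)) ≤ Real.log 2 * (1 + Real.exp x) := by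
          nlinarith
        -- _root_.sigmoid x ≤ log 2 * 2^x
        have key : Real.exp x ≤ Real.log 2 * Real.exp (x * Real.log 2) * (1 + Real.exp x) := by
          have hsplit : Real.exp x = Real.exp (x * (1 - Real.log 2)) * Real.exp (x * Real.log 2) := by
            rw [← Real.exp_add]; ring_nf
          nlinarith [mul_le_mul_of_nonneg_right amgm2 (Real.exp_pos (x * Real.log 2)).le,
            hsplit]
        have hsig : _root_.sigmoid x ≤ Real.log 2 * (2:ℝ) ^ x := by
          rw [_root_.sigmoid, div_le_iff₀ hE1, h2x]
          exact key
        linarith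
      · -- upper bound
        set t : ℝ := Real.exp (x - xc) with ht
        have ht_pos : 0 < t := Real.exp_pos _
        have ht1 : t ≤ 1 := by
          rw [ht, Real.exp_le_one_iff]; linarith
        -- log 2 * 2^x = t ^ log 2
        have hid : Real.log 2 * (2:ℝ) ^ x = t ^ (Real.log 2) := by
          have : (2:ℝ) ^ x = (2:ℝ) ^ xc * (2:ℝ) ^ (x - xc) := by
            rw [← Real.rpow_add (by norm_num)]; ring_nf
          rw [this, ← mul_assoc, log2_mul_two_rpow_xc, one_mul, ht,
            Real.rpow_def_of_pos (by norm_num : (0:ℝ) < 2), ← Real.exp_mul, mul_comm]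
        -- t^{log 2} ≤ t^{1-a}
        have hstep1 : t ^ (Real.log 2) ≤ t ^ (1 - a) :=
          Real.rpow_le_rpow_of_exponent_ge ht_pos ht1 one_sub_a_le
        -- t^{1-a} ≤ (1-a) t + a
        have amgm : t ^ (1 - a) * (1:ℝ) ^ a ≤ (1 - a) * t + a * 1 :=
          Real.geom_mean_le_arith_mean2_weighted (by linarith) ha_pos.le ht_pos.le
            zero_le_one (by ring)
        rw [Real.one_rpow, mul_one, mul_one] at amgm
        -- _root_.sigmoid x ≥ (1-a) t
        have hEx : Real.exp x = Real.exp xc * t := by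
          rw [ht, ← Real.exp_add]; ring_nf
        have h1a : (1 - a) = Real.exp xc / (1 + Real.exp xc) := by
          rw [ha]; field_simp; ring
        have hsig : (1 - a) * t ≤ _root_.sigmoid x := by
          rw [_root_.sigmoid, h1a, hEx, div_mul_eq_mul_div]
          gcongr
          nlinarith
        calc Real.log 2 * (2:ℝ) ^ x - _root_.sigmoid x
            ≤ t ^ (1 - a) - (1 - a) * t := by rw [hid]; linarith
          _ ≤ a := by linarith
    · -- case x ≥ xc: PTSoftplus' x = 1
      push_neg at hx
      have hE : (0:ℝ) < Real.exp x := Real.exp_pos _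
      have hE1 : (0:ℝ) < 1 + Real.exp x := by positivity
      have hEge : Real.exp xc ≤ Real.exp x := Real.exp_le_exp.2 hx
      rw [PTSoftplus', if_neg (not_lt.2 hx)]
      have h1 : 1 - _root_.sigmoid x = 1 / (1 + Real.exp x) := by
        rw [_root_.sigmoid]; field_simp; ring
      have hs1 : _root_.sigmoid x ≤ 1 := by
        rw [_root_.sigmoid, div_le_one hE1]; linarith
      rw [abs_of_nonneg (by linarith)]
      rw [h1]
      apply one_div_le_one_div_of_le hEc1 (by linarith)
  · -- numeric bound
    rw [div_le_iff₀ hEc1]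
    nlinarith [exp_xc_ge]
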